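/- Let n ∈ ℕ and α, β ∈ ℝ. The diffeomorphism ψ of ℝ³ defined by ψ(x,y,z) = (x + αy + βz, y, z) normalizes the group Γ_n if and only if α ∈ ℤ and β ∈ ℤ. In particular, if θ is an irrational real number, then the map (x,y,z) ↦ (x − βθ·y + β·z, y, z) normalizes Γ_n if and only if β = 0. -/

import Mathlib

noncomputable section

/-- The bijection `(x,y,z) ↦ (x + φ(y,z), y + ψ(z), z + b)` of `ℝ³`. -/
def affMap (φ : ℝ × ℝ → ℝ) (ψ : ℝ → ℝ) (b : ℝ) : Equiv.Perm (ℝ × ℝ × ℝ) where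
  toFun p := (p.1 + φ p.2, p.2.1 + ψ p.2.2, p.2.2 + b)
  invFun p := (p.1 - φ (p.2.1 - ψ (p.2.2 - b), p.2.2 - b), p.2.1 - ψ (p.2.2 - b), p.2.2 - b)
  left_inv := by rintro ⟨x, y, z⟩; simp
  right_inv := by rintro ⟨x, y, z⟩; simp


/-- The group `Γ_{n,c₁,c₂}`, generated by `(x,y,z) ↦ (x+1,y,z)`,
`(x,y,z) ↦ (x+c₁,y+1,z)` and `(x,y,z) ↦ (x+ny+c₂,y,z+1)`. -/
def Gamma (n : ℕ) (c₁ c₂ : ℝ) : Subgroup (Equiv.Perm (ℝ × ℝ × ℝ)) :=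
  Subgroup.closure
    { affMap (fun _ => 1) (fun _ => 0) 0,
      affMap (fun _ => c₁) (fun _ => 1) 0,
      affMap (fun q => n * q.1 + c₂) (fun _ => 0) 1 }

/-- `(x,y,z) ↦ (x + ncy + a, y+b, z+c)`. -/
def Gm (n : ℕ) (a b c : ℝ) : Equiv.Perm (ℝ × ℝ × ℝ) :=
  affMap (fun w => n * c * w.1 + a) (fun _ => b) c

lemma Gm_congr {n : ℕ} {a b c a' b' c' : ℝ} (h1 : a = a') (h2 : b = b') (h3 : c = c') :
    Gm n a b c = Gm n a' b' c' := by rw [h1, h2, h3]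

lemma Gm_apply (n : ℕ) (a b c : ℝ) (p : ℝ × ℝ × ℝ) :
    Gm n a b c p = (p.1 + (n * c * p.2.1 + a), p.2.1 + b, p.2.2 + c) := rfl

lemma Gm_mul (n : ℕ) (a b c a' b' c' : ℝ) :
    Gm n a' b' c' * Gm n a b c = Gm n (a + a' + n * c' * b) (b + b') (c + c') := by
  refine Equiv.ext fun ⟨x, y, z⟩ => ?_
  simp only [Equiv.Perm.mul_apply, Gm_apply]
  refine Prod.ext ?_ (Prod.ext ?_ ?_) <;> simp <;> ring

lemma Gm_one (n : ℕ) : Gm n 0 0 0 = 1 := by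
  refine Equiv.ext fun ⟨x, y, z⟩ => ?_
  simp [Gm_apply]

lemma Gm_inv (n : ℕ) (a b c : ℝ) : (Gm n a b c)⁻¹ = Gm n (n * c * b - a) (-b) (-c) := by
  refine inv_eq_of_mul_eq_one_right ?_
  rw [Gm_mul, ← Gm_one n]
  exact Gm_congr (by ring) (by ring) (by ring)

lemma Gm_pow1 (n : ℕ) (k : ℤ) : (Gm n 1 0 0) ^ k = Gm n k 0 0 := by
  induction k using Int.induction_on with
  | zero => simpa using (Gm_one n).symm
  | succ k ih =>
      rw [zpow_add_one, ih, Gm_mul]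
      exact Gm_congr (by push_cast; ring) (by ring) (by ring)
  | pred k ih =>
      rw [zpow_sub_one, ih, Gm_inv, Gm_mul]
      exact Gm_congr (by push_cast; ring) (by ring) (by ring)

lemma Gm_pow2 (n : ℕ) (k : ℤ) : (Gm n 0 1 0) ^ k = Gm n 0 k 0 := by
  induction k using Int.induction_on with
  | zero => simpa using (Gm_one n).symm
  | succ k ih =>
      rw [zpow_add_one, ih, Gm_mul]
      exact Gm_congr (by push_cast; ring) (by push_cast; ring) (by ring)
  | pred k ih =>
      rw [zpow_sub_one, ih, Gm_inv, Gm_mul]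
      exact Gm_congr (by push_cast; ring) (by push_cast; ring) (by ring)

lemma Gm_pow3 (n : ℕ) (k : ℤ) : (Gm n 0 0 1) ^ k = Gm n 0 0 k := by
  induction k using Int.induction_on with
  | zero => simpa using (Gm_one n).symm
  | succ k ih =>
      rw [zpow_add_one, ih, Gm_mul]
      exact Gm_congr (by push_cast; ring) (by ring) (by push_cast; ring)
  | pred k ih =>
      rw [zpow_sub_one, ih, Gm_inv, Gm_mul]
      exact Gm_congr (by push_cast; ring) (by ring) (by push_cast; ring)

/-- The explicit description of `Γ_{n,0,0}` as a subgroup. -/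
def GammaS (n : ℕ) : Subgroup (Equiv.Perm (ℝ × ℝ × ℝ)) where
  carrier := {g | ∃ a b c : ℤ, g = Gm n a b c}
  one_mem' := ⟨0, 0, 0, by simpa using (Gm_one n).symm⟩
  mul_mem' := by
    rintro _ _ ⟨a', b', c', rfl⟩ ⟨a, b, c, rfl⟩
    exact ⟨a + a' + n * c' * b, b + b', c + c', by
      rw [Gm_mul]; exact Gm_congr (by push_cast; ring) (by push_cast; ring) (by push_cast; ring)⟩
  inv_mem' := by
    rintro _ ⟨a, b, c, rfl⟩
    exact ⟨n * c * b - a, -b, -c, by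
      rw [Gm_inv]; exact Gm_congr (by push_cast; ring) (by push_cast; ring) (by push_cast; ring)⟩

lemma gen1_eq (n : ℕ) : affMap (fun _ => 1) (fun _ => 0) 0 = Gm n 1 0 0 := by
  refine Equiv.ext fun ⟨x, y, z⟩ => ?_
  simp [Gm_apply, affMap]

lemma gen2_eq (n : ℕ) : affMap (fun _ => (0:ℝ)) (fun _ => 1) 0 = Gm n 0 1 0 := by
  refine Equiv.ext fun ⟨x, y, z⟩ => ?_
  simp [Gm_apply, affMap]

lemma gen3_eq (n : ℕ) : affMap (fun q => (n : ℝ) * q.1 + 0) (fun _ => 0) 1 = Gm n 0 0 1 := by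
  refine Equiv.ext fun ⟨x, y, z⟩ => ?_
  simp [Gm_apply, affMap]

lemma Gamma_eq (n : ℕ) : Gamma n 0 0 = GammaS n := by
  refine le_antisymm ((Subgroup.closure_le _).2 ?_) ?_
  · rintro g (rfl | rfl | rfl)
    · exact ⟨1, 0, 0, by rw [gen1_eq]; exact Gm_congr (by push_cast; ring) (by push_cast; ring) (by push_cast; ring)⟩
    · exact ⟨0, 1, 0, by rw [gen2_eq]; exact Gm_congr (by push_cast; ring) (by push_cast; ring) (by push_cast; ring)⟩
    · exact ⟨0, 0, 1, by rw [gen3_eq]; exact Gm_congr (by push_cast; ring) (by push_cast; ring) (by push_cast; ring)⟩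
  · rintro _ ⟨a, b, c, rfl⟩
    have h1 : affMap (fun _ => 1) (fun _ => 0) 0 ∈ Gamma n 0 0 :=
      Subgroup.subset_closure (by left; rfl)
    have h2 : affMap (fun _ => (0:ℝ)) (fun _ => 1) 0 ∈ Gamma n 0 0 :=
      Subgroup.subset_closure (by right; left; rfl)
    have h3 : affMap (fun q => (n : ℝ) * q.1 + 0) (fun _ => 0) 1 ∈ Gamma n 0 0 :=
      Subgroup.subset_closure (by right; right; rfl)
    have key : Gm n a b c =
        (affMap (fun q => (n : ℝ) * q.1 + 0) (fun _ => 0) 1) ^ (c : ℤ) *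
        ((affMap (fun _ => (0:ℝ)) (fun _ => 1) 0) ^ (b : ℤ) *
          (affMap (fun _ => 1) (fun _ => 0) 0) ^ (a - n * c * b : ℤ)) := by
      rw [gen1_eq, gen2_eq, gen3_eq, Gm_pow1, Gm_pow2, Gm_pow3, Gm_mul, Gm_mul]
      exact (Gm_congr (by push_cast; ring) (by push_cast; ring) (by push_cast; ring)).symm
    rw [key]
    exact mul_mem (zpow_mem h3 _) (mul_mem (zpow_mem h2 _) (zpow_mem h1 _))

def shear (α β : ℝ) : Equiv.Perm (ℝ × ℝ × ℝ) :=
  affMap (fun w => α * w.1 + β * w.2) (fun _ => 0) 0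

lemma shear_apply (α β : ℝ) (p : ℝ × ℝ × ℝ) :
    shear α β p = (p.1 + (α * p.2.1 + β * p.2.2), p.2.1 + 0, p.2.2 + 0) := rfl

lemma shear_inv (α β : ℝ) : (shear α β)⁻¹ = shear (-α) (-β) := by
  refine inv_eq_of_mul_eq_one_right ?_
  refine Equiv.ext fun ⟨x, y, z⟩ => ?_
  simp only [Equiv.Perm.mul_apply, shear_apply, Equiv.Perm.one_apply]
  refine Prod.ext ?_ (Prod.ext ?_ ?_) <;> simp <;> ring

lemma shear_conj (n : ℕ) (α β a b c : ℝ) :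
    shear α β * Gm n a b c * (shear α β)⁻¹ = Gm n (a + α * b + β * c) b c := by
  rw [shear_inv]
  refine Equiv.ext fun ⟨x, y, z⟩ => ?_
  simp only [Equiv.Perm.mul_apply, shear_apply, Gm_apply]
  refine Prod.ext ?_ (Prod.ext ?_ ?_) <;> simp <;> ring

lemma Gm_inj {n : ℕ} {a b c a' b' c' : ℝ} (h : Gm n a b c = Gm n a' b' c') :
    a = a' ∧ b = b' ∧ c = c' := by
  have := congrArg (fun e : Equiv.Perm (ℝ × ℝ × ℝ) => e (0, 0, 0)) h
  simp only [Gm_apply] at this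
  simp only [Prod.mk.injEq, zero_add, mul_zero] at this
  exact this

lemma shear_main (n : ℕ) (α β : ℝ) :
    shear α β ∈ Subgroup.normalizer (Gamma n 0 0 : Set (Equiv.Perm (ℝ × ℝ × ℝ))) ↔ (∃ m : ℤ, α = m) ∧ (∃ m : ℤ, β = m) := by
  rw [Subgroup.mem_normalizer_iff, Gamma_eq]
  constructor
  · intro h
    constructor
    · have hm : Gm n (0:ℤ) (1:ℤ) (0:ℤ) ∈ GammaS n := ⟨0, 1, 0, rfl⟩
      have := (h _).1 hm
      rw [shear_conj] at this
      obtain ⟨a, b, c, hg⟩ := this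
      obtain ⟨h1, -, -⟩ := Gm_inj hg
      exact ⟨a, by push_cast at h1 ⊢; linarith⟩
    · have hm : Gm n (0:ℤ) (0:ℤ) (1:ℤ) ∈ GammaS n := ⟨0, 0, 1, rfl⟩
      have := (h _).1 hm
      rw [shear_conj] at this
      obtain ⟨a, b, c, hg⟩ := this
      obtain ⟨h1, -, -⟩ := Gm_inj hg
      exact ⟨a, by push_cast at h1 ⊢; linarith⟩
  · rintro ⟨⟨p, rfl⟩, ⟨q, rfl⟩⟩ g
    constructor
    · rintro ⟨a, b, c, rfl⟩
      rw [shear_conj]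
      exact ⟨a + p * b + q * c, b, c,
        Gm_congr (by push_cast; ring) rfl rfl⟩
    · intro hmem
      obtain ⟨a, b, c, hg⟩ := hmem
      have : g = (shear (p:ℝ) (q:ℝ))⁻¹ * (shear (p:ℝ) (q:ℝ) * g * (shear (p:ℝ) (q:ℝ))⁻¹) * shear (p:ℝ) (q:ℝ) := by
        group
      rw [this, hg, shear_inv,
        show shear (p:ℝ) (q:ℝ) = (shear (-(p:ℝ)) (-(q:ℝ)))⁻¹ by rw [shear_inv, neg_neg, neg_neg],
        shear_conj]
      exact ⟨a - p * b - q * c, b, c, Gm_congr (by push_cast; ring) rfl rfl⟩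

/-- The shear `ψ(x,y,z) = (x + αy + βz, y, z)` normalizes `Γ_n = Γ_{n,0,0}` iff
`α ∈ ℤ` and `β ∈ ℤ`; in particular for `θ` irrational, `(x,y,z) ↦ (x − βθy + βz, y, z)`
normalizes `Γ_n` iff `β = 0`. -/
theorem stmt_12 (n : ℕ) :
    (∀ α β : ℝ,
      affMap (fun w => α * w.1 + β * w.2) (fun _ => 0) 0 ∈ Subgroup.normalizer (Gamma n 0 0 : Set (Equiv.Perm (ℝ × ℝ × ℝ))) ↔
        (∃ m : ℤ, α = m) ∧ (∃ m : ℤ, β = m)) ∧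
    ∀ θ : ℝ, Irrational θ → ∀ β : ℝ,
      (affMap (fun w => -(β * θ) * w.1 + β * w.2) (fun _ => 0) 0 ∈ Subgroup.normalizer (Gamma n 0 0 : Set (Equiv.Perm (ℝ × ℝ × ℝ)))
        ↔ β = 0) := by
  refine ⟨fun α β => shear_main n α β, fun θ hθ β => ?_⟩
  rw [show (affMap (fun w => -(β * θ) * w.1 + β * w.2) (fun _ => 0) 0) = shear (-(β * θ)) β
      from rfl, shear_main n]
  constructor
  · rintro ⟨⟨m₁, h₁⟩, ⟨m₂, h₂⟩⟩
    by_contra hb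
    have hm₂ : (m₂ : ℝ) ≠ 0 := by rw [← h₂]; exact hb
    refine hθ ⟨(-m₁ : ℚ) / m₂, ?_⟩
    have : θ = -(m₁ : ℝ) / m₂ := by
      field_simp
      have : β * θ = -m₁ := by linarith
      rw [h₂] at this; linarith
    rw [this]; push_cast; ring
  · rintro rfl
    exact ⟨⟨0, by push_cast; ring_nf⟩, ⟨0, by push_cast; ring⟩⟩
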